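/- Let x_1, …, x_N ∈ ℝ^d with N ≥ 1, β > 0, and E(ξ) = ½·⟨ξ, ξ⟩ − β⁻¹·log(∑_{i=1}^N exp(β·⟨x_i, ξ⟩)). Then ξ ∈ ℝ^d is a stationary point of E (i.e., ∇E(ξ) = 0) if and only if ξ is a fixed point of the Hopfield update rule, i.e., ξ = ∑_{i=1}^N softmax(β·Xᵀξ)_i · x_i. -/

import Mathlib

open scoped RealInnerProductSpace

/-- `ξ` is a stationary point of the Hopfield energy
`E(ξ) = ½·⟨ξ,ξ⟩ − β⁻¹·log(∑ᵢ exp(β·⟨xᵢ,ξ⟫))` (i.e. `∇E(ξ) = 0`) iff `ξ` is a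
fixed point of the Hopfield update rule `ξ = ∑ᵢ softmax(β·Xᵀξ)ᵢ • xᵢ`. -/
theorem hopfield_stationary_iff_fixed_point
    (N d : ℕ) (hN : 1 ≤ N) (β : ℝ) (hβ : 0 < β)
    (x : Fin N → EuclideanSpace ℝ (Fin d))
    (E : EuclideanSpace ℝ (Fin d) → ℝ)
    (hE : E = fun ξ =>
      (1 / 2) * ⟪ξ, ξ⟫ - β⁻¹ * Real.log (∑ i, Real.exp (β * ⟪x i, ξ⟫))) :
    ∀ ξ : EuclideanSpace ℝ (Fin d),
      gradient E ξ = 0 ↔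
        ξ = ∑ i, (Real.exp (β * ⟪x i, ξ⟫) /
          ∑ m, Real.exp (β * ⟪x m, ξ⟫)) • x i := by
  intro ξ
  haveI : NeZero N := ⟨by omega⟩
  set S : EuclideanSpace ℝ (Fin d) → ℝ := fun z => ∑ i, Real.exp (β * ⟪x i, z⟫)
    with hSdef
  have hSpos : 0 < S ξ :=
    Finset.sum_pos (fun i _ => Real.exp_pos _) Finset.univ_nonempty
  have hSne : S ξ ≠ 0 := ne_of_gt hSpos
  -- derivative of S
  have hS' : HasFDerivAt S
      (∑ i, (Real.exp (β * ⟪x i, ξ⟫) * β) • innerSL ℝ (x i)) ξ := by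
    apply HasFDerivAt.fun_sum
    intro i _
    have h1 : HasFDerivAt (fun z : EuclideanSpace ℝ (Fin d) => β * ⟪x i, z⟫)
        (β • innerSL ℝ (x i)) ξ := ((innerSL ℝ (x i)).hasFDerivAt).const_mul β
    have h2 := h1.exp
    refine h2.congr_fderiv (Eq.symm ?_)
    rw [smul_smul, mul_comm]
  -- derivative of the quadratic part
  have hQ : HasFDerivAt (fun z : EuclideanSpace ℝ (Fin d) => (1 / 2 : ℝ) * ⟪z, z⟫)
      (innerSL ℝ ξ) ξ := by
    have h := ((hasFDerivAt_id ξ).inner ℝ (hasFDerivAt_id ξ)).const_mul (1 / 2 : ℝ)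
    refine h.congr_fderiv (Eq.symm ?_)
    ext v
    simp only [ContinuousLinearMap.coe_smul', Pi.smul_apply, ContinuousLinearMap.add_apply,
      ContinuousLinearMap.coe_comp', Function.comp_apply, fderivInnerCLM_apply,
      ContinuousLinearMap.prod_apply, ContinuousLinearMap.coe_id', id_eq,
      innerSL_apply_apply, smul_eq_mul]
    rw [real_inner_comm v ξ]
    ring
  -- derivative of E
  have hE' : HasFDerivAt E
      (innerSL ℝ ξ - β⁻¹ • ((S ξ)⁻¹ •
        (∑ i, (Real.exp (β * ⟪x i, ξ⟫) * β) • innerSL ℝ (x i)))) ξ := by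
    rw [hE]
    exact hQ.sub ((hS'.log hSne).const_mul β⁻¹)
  -- the gradient
  set g : EuclideanSpace ℝ (Fin d) :=
    ξ - ∑ i, (Real.exp (β * ⟪x i, ξ⟫) / S ξ) • x i with hg
  have hgrad : HasGradientAt E g ξ := by
    rw [hasGradientAt_iff_hasFDerivAt]
    refine hE'.congr_fderiv (Eq.symm ?_)
    ext v
    simp only [InnerProductSpace.toDual_apply_apply, hg, inner_sub_left, inner_smul_left,
      sum_inner, ContinuousLinearMap.sub_apply, ContinuousLinearMap.coe_smul',
      Pi.smul_apply, ContinuousLinearMap.sum_apply, innerSL_apply_apply, smul_eq_mul,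
      RCLike.inner_apply, conj_trivial, Finset.mul_sum]
    congr 1
    apply Finset.sum_congr rfl
    intro i _
    field_simp
  have hgv : gradient E ξ = g := hgrad.gradient
  rw [hgv, hg, sub_eq_zero]
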